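/- Primal characterization of the restricted Lagrangian dual (Lemma 2): if X ⊆ ℝⁿ is the union of finitely many polyhedra (e.g., a bounded mixed-integer linear set) that is compact and nonempty, then z^{RLD} := sup_{α ∈ ℝᴷ} inf_{x ∈ X} ( cᵀx + (Gα)ᵀ(d − Dx) ) equals min { cᵀx : x ∈ conv(X), Gᵀ(Dx − d) = 0 }, provided the latter feasible set is nonempty. -/

import Mathlib

open scoped Matrix Pointwise

noncomputable def lagrangianValue {n m : ℕ} (X : Set (Fin n → ℝ)) (c : Fin n → ℝ)
    (D : Matrix (Fin m) (Fin n) ℝ) (d : Fin m → ℝ) (lam : Fin m → ℝ) : EReal :=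
  ⨅ x ∈ X, ((c ⬝ᵥ x + lam ⬝ᵥ (d - D.mulVec x) : ℝ) : EReal)

/-- dot product identity -/
lemma RDP.dot_aux {m K : ℕ} (G : Matrix (Fin m) (Fin K) ℝ) (α : Fin K → ℝ) (w : Fin m → ℝ) :
    G.mulVec α ⬝ᵥ w = α ⬝ᵥ G.transpose.mulVec w := by
  rw [Matrix.mulVec_transpose, dotProduct_comm, Matrix.dotProduct_mulVec,
    dotProduct_comm]

/-- a linear functional on the convex hull is bounded below by its value at some point of X -/
lemma RDP.exists_le {n : ℕ} {X : Set (Fin n → ℝ)} (ℓ : (Fin n → ℝ) →ₗ[ℝ] ℝ)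
    {x : Fin n → ℝ} (hx : x ∈ convexHull ℝ X) : ∃ y ∈ X, ℓ y ≤ ℓ x := by
  by_contra h
  push_neg at h
  have hconv : Convex ℝ {y | ℓ x < ℓ y} := convex_halfSpace_gt (ℓ.isLinear) (ℓ x)
  have hmem : x ∈ {y | ℓ x < ℓ y} := convexHull_min (fun y hy => h y hy) hconv hx
  exact lt_irrefl (ℓ x) hmem

/-- dot product as a linear map -/
noncomputable def RDP.dotL {n : ℕ} (c : Fin n → ℝ) : (Fin n → ℝ) →ₗ[ℝ] ℝ where
  toFun := fun x => c ⬝ᵥ x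
  map_add' := fun x y => dotProduct_add c x y
  map_smul' := fun r x => by simp [dotProduct_smul]

/-- the lifting map to (Fin K → ℝ) × ℝ -/
noncomputable def RDP.lift {n m K : ℕ} (c : Fin n → ℝ) (D : Matrix (Fin m) (Fin n) ℝ)
    (G : Matrix (Fin m) (Fin K) ℝ) : (Fin n → ℝ) →ₗ[ℝ] ((Fin K → ℝ) × ℝ) where
  toFun := fun x => (G.transpose.mulVec (D.mulVec x), c ⬝ᵥ x)
  map_add' := fun x y => by
    simp [Matrix.mulVec_add, dotProduct_add, Prod.ext_iff]
  map_smul' := fun r x => by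
    simp [Matrix.mulVec_smul, dotProduct_smul, Prod.ext_iff]

/-- Key separation lemma: strong duality up to ε. -/
lemma RDP.sep {n m K : ℕ} (X : Set (Fin n → ℝ))
    (hpoly : ∃ s : Finset (Fin n → ℝ), convexHull ℝ X = convexHull ℝ (s : Set (Fin n → ℝ)))
    (c : Fin n → ℝ) (D : Matrix (Fin m) (Fin n) ℝ) (d : Fin m → ℝ)
    (G : Matrix (Fin m) (Fin K) ℝ)
    {xstar : Fin n → ℝ}
    (hxs : xstar ∈ convexHull ℝ X) (hxf : G.transpose.mulVec (D.mulVec xstar - d) = 0)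
    (hmin : ∀ x ∈ convexHull ℝ X, G.transpose.mulVec (D.mulVec x - d) = 0 →
      c ⬝ᵥ xstar ≤ c ⬝ᵥ x)
    {ε : ℝ} (hε : 0 < ε) :
    ∃ α : Fin K → ℝ, ∀ x ∈ convexHull ℝ X,
      c ⬝ᵥ xstar - ε < c ⬝ᵥ x + (G.mulVec α) ⬝ᵥ (d - D.mulVec x) := by
  classical
  obtain ⟨s, hs⟩ := hpoly
  set v : ℝ := c ⬝ᵥ xstar with hv
  set L := RDP.lift c D G with hL
  set Cset : Set ((Fin K → ℝ) × ℝ) :=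
    (L '' (convexHull ℝ X)) + ({(0 : Fin K → ℝ)} ×ˢ Set.Ici (0 : ℝ)) with hCset
  have hconv : Convex ℝ Cset :=
    ((convex_convexHull ℝ X).linear_image L).add
      ((convex_singleton 0).prod (convex_Ici 0))
  have hcompact : IsCompact (L '' (convexHull ℝ X)) := by
    rw [hs]
    exact (s.finite_toSet.isCompact_convexHull ℝ).image L.continuous_of_finiteDimensional
  have hclosed : IsClosed Cset :=
    IsClosed.add_left_of_isCompact (isClosed_singleton.prod isClosed_Ici) hcompact
  -- the separated point
  set p : (Fin K → ℝ) × ℝ := (G.transpose.mulVec d, v - ε) with hp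
  have hpnot : p ∉ Cset := by
    intro hmem
    rw [hCset, Set.mem_add] at hmem
    obtain ⟨q, ⟨x, hxX, rfl⟩, r, hr, heq⟩ := hmem
    obtain ⟨hr1, hr2⟩ := Set.mem_prod.1 hr
    simp only [Set.mem_singleton_iff] at hr1
    have h1 : G.transpose.mulVec (D.mulVec x) + r.1 = G.transpose.mulVec d := by
      have := congrArg Prod.fst heq; simpa [hL, RDP.lift] using this
    have h2 : c ⬝ᵥ x + r.2 = v - ε := by
      have := congrArg Prod.snd heq; simpa [hL, RDP.lift] using this
    rw [hr1, add_zero] at h1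
    have hxfeas : G.transpose.mulVec (D.mulVec x - d) = 0 := by
      rw [Matrix.mulVec_sub, h1, sub_self]
    have := hmin x hxX hxfeas
    have hr2' : (0 : ℝ) ≤ r.2 := hr2
    linarith
  obtain ⟨f, u, hCu, hup⟩ := geometric_hahn_banach_closed_point hconv hclosed hpnot
  -- decompose f
  set β : ℝ := f (0, 1) with hβdef
  have hfdec : ∀ (y : Fin K → ℝ) (r : ℝ), f (y, r) = f (y, 0) + r * β := by
    intro y r
    have : (y, r) = (y, 0) + r • ((0 : Fin K → ℝ), (1 : ℝ)) := by
      simp [Prod.ext_iff]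
    rw [this, map_add, map_smul]
    simp [hβdef, smul_eq_mul]
  -- membership of lifted points
  have hmemC : ∀ x ∈ convexHull ℝ X, ∀ t : ℝ, 0 ≤ t → L x + (0, t) ∈ Cset := by
    intro x hx t ht
    exact Set.add_mem_add ⟨x, hx, rfl⟩ (Set.mem_prod.2 ⟨rfl, ht⟩)
  set a : ℝ := f (G.transpose.mulVec d, 0) with hadef
  have hfp : f p = a + (v - ε) * β := hfdec _ _
  -- use the feasible point xstar
  have hxsd : G.transpose.mulVec (D.mulVec xstar) = G.transpose.mulVec d := by
    have := hxf; rw [Matrix.mulVec_sub, sub_eq_zero] at this; exact this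
  have hxsd' : (Gᵀ * D) *ᵥ xstar = G.transpose.mulVec d := by
    rw [← Matrix.mulVec_mulVec]; exact hxsd
  have hkey : ∀ t : ℝ, 0 ≤ t → a + (v + t) * β < u := by
    intro t ht
    have := hCu _ (hmemC xstar hxs t ht)
    have hLx : L xstar + (0, t) = (G.transpose.mulVec d, v + t) := by
      simp [hL, RDP.lift, hxsd, hxsd', Prod.ext_iff, hv]
    rw [hLx, hfdec] at this
    exact this
  have hβneg : β < 0 := by
    rcases lt_trichotomy β 0 with h | h | h
    · exact h
    · exfalso
      have h0 := hkey 0 le_rfl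
      rw [hfp] at hup
      rw [h] at h0 hup
      simp at h0 hup
      linarith
    · exfalso
      set t := max 0 ((u - a - v * β) / β + 1) with htdef
      have ht0 : 0 ≤ t := le_max_left _ _
      have ht1 : (u - a - v * β) / β + 1 ≤ t := le_max_right _ _
      have := hkey t ht0
      have htβ : u - a - v * β + β ≤ t * β := by
        have := mul_le_mul_of_nonneg_right ht1 (le_of_lt h)
        rw [add_mul, div_mul_cancel₀ _ (ne_of_gt h), one_mul] at this
        linarith
      nlinarith
  -- the multiplier
  set α : Fin K → ℝ := fun i => f (Pi.single i 1, 0) / (-β) with hαdef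
  have hα : ∀ y : Fin K → ℝ, f (y, 0) = (-β) * (α ⬝ᵥ y) := by
    intro y
    have hy : ((y, (0:ℝ)) : (Fin K → ℝ) × ℝ)
        = ∑ i, y i • ((Pi.single i 1 : Fin K → ℝ), (0 : ℝ)) := by
      rw [Prod.ext_iff]
      constructor
      · rw [Prod.fst_sum]
        simp only [Prod.smul_mk, Prod.fst]
        simp [← Pi.single_smul]
        exact (Finset.univ_sum_single y).symm
      · rw [Prod.snd_sum]
        simp
    rw [hy, map_sum]
    simp only [map_smul, smul_eq_mul]
    rw [dotProduct, Finset.mul_sum]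
    apply Finset.sum_congr rfl
    intro i _
    rw [hαdef]
    have hβ0 : β ≠ 0 := ne_of_lt hβneg
    field_simp
  refine ⟨α, fun x hx => ?_⟩
  have hmemx := hCu _ (hmemC x hx 0 le_rfl)
  have hLx : L x + (0, (0:ℝ)) = (G.transpose.mulVec (D.mulVec x), c ⬝ᵥ x) := by
    simp [hL, RDP.lift]
  rw [hLx, hfdec, hα] at hmemx
  rw [hfp, hadef, hα] at hup
  -- hmemx : -β * (α ⬝ᵥ GᵀDx) + (c⬝x)β < u ; hup : u < -β * (α ⬝ᵥ Gᵀd) + (v-ε)β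
  have hineq : (-β) * (α ⬝ᵥ G.transpose.mulVec (D.mulVec x)) + (c ⬝ᵥ x) * β
      < (-β) * (α ⬝ᵥ G.transpose.mulVec d) + (v - ε) * β := lt_trans hmemx hup
  have hgoal : (G.mulVec α) ⬝ᵥ (d - D.mulVec x)
      = α ⬝ᵥ G.transpose.mulVec d - α ⬝ᵥ G.transpose.mulVec (D.mulVec x) := by
    rw [RDP.dot_aux, Matrix.mulVec_sub, dotProduct_sub]
  rw [hgoal]
  nlinarith [hβneg, hineq]

/-- Primal characterization of the restricted Lagrangian dual (Lemma 2). -/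
theorem restricted_dual_primal_characterization {n m K : ℕ} (X : Set (Fin n → ℝ))
    (hX : X.Nonempty) (hcomp : IsCompact X)
    (hpoly : ∃ s : Finset (Fin n → ℝ), convexHull ℝ X = convexHull ℝ (s : Set (Fin n → ℝ)))
    (c : Fin n → ℝ) (D : Matrix (Fin m) (Fin n) ℝ) (d : Fin m → ℝ)
    (G : Matrix (Fin m) (Fin K) ℝ)
    (hfeas : ∃ x ∈ convexHull ℝ X, G.transpose.mulVec (D.mulVec x - d) = 0) :
    (⨆ α : Fin K → ℝ, lagrangianValue X c D d (G.mulVec α)) =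
      ⨅ x ∈ {x ∈ convexHull ℝ X | G.transpose.mulVec (D.mulVec x - d) = 0},
        ((c ⬝ᵥ x : ℝ) : EReal) := by
  classical
  obtain ⟨s, hs⟩ := hpoly
  set S : Set (Fin n → ℝ) :=
    {x ∈ convexHull ℝ X | G.transpose.mulVec (D.mulVec x - d) = 0} with hSdef
  -- S is compact and nonempty
  have hXc : IsCompact (convexHull ℝ X) := by
    rw [hs]; exact s.finite_toSet.isCompact_convexHull ℝ
  have hcont : Continuous fun x : Fin n → ℝ =>
      G.transpose.mulVec (D.mulVec x - d) := by
    have : (fun x : Fin n → ℝ => G.transpose.mulVec (D.mulVec x - d))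
        = fun x => (G.transpose.mulVecLin.comp D.mulVecLin) x - G.transpose.mulVec d := by
      funext x
      rw [LinearMap.comp_apply, Matrix.mulVecLin_apply, Matrix.mulVecLin_apply,
        Matrix.mulVec_sub]
    rw [this]
    exact ((G.transpose.mulVecLin.comp D.mulVecLin).continuous_of_finiteDimensional).sub
      continuous_const
  have hSclosed2 : IsClosed {x : Fin n → ℝ | G.transpose.mulVec (D.mulVec x - d) = 0} :=
    isClosed_singleton.preimage hcont
  have hScomp : IsCompact S := hXc.inter_right hSclosed2
  have hSne : S.Nonempty := hfeas
  have hccont : Continuous fun x : Fin n → ℝ => c ⬝ᵥ x :=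
    (RDP.dotL c).continuous_of_finiteDimensional
  obtain ⟨xstar, hxstarS, hmin⟩ := hScomp.exists_isMinOn hSne hccont.continuousOn
  have hxs1 : xstar ∈ convexHull ℝ X := hxstarS.1
  have hxs2 : G.transpose.mulVec (D.mulVec xstar - d) = 0 := hxstarS.2
  set v : ℝ := c ⬝ᵥ xstar with hv
  have hmin' : ∀ x ∈ S, v ≤ c ⬝ᵥ x := fun x hx => isMinOn_iff.1 hmin x hx
  -- RHS equals v
  have hRHS : (⨅ x ∈ S, ((c ⬝ᵥ x : ℝ) : EReal)) = (v : EReal) := by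
    apply le_antisymm
    · exact iInf₂_le xstar hxstarS
    · exact le_iInf₂ fun x hx => EReal.coe_le_coe_iff.2 (hmin' x hx)
  rw [hRHS]
  set Lhs : EReal := ⨆ α : Fin K → ℝ, lagrangianValue X c D d (G.mulVec α) with hLhs
  -- weak duality: Lhs ≤ v
  have hweak : Lhs ≤ (v : EReal) := by
    apply iSup_le
    intro α
    set lam : Fin m → ℝ := G.mulVec α with hlam
    set ℓ : (Fin n → ℝ) →ₗ[ℝ] ℝ :=
      RDP.dotL c - (RDP.dotL lam).comp D.mulVecLin with hℓ
    have hℓval : ∀ x, c ⬝ᵥ x + lam ⬝ᵥ (d - D.mulVec x) = ℓ x + lam ⬝ᵥ d := by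
      intro x
      simp only [hℓ, LinearMap.sub_apply, LinearMap.comp_apply, Matrix.mulVecLin_apply,
        RDP.dotL, LinearMap.coe_mk, AddHom.coe_mk]
      rw [dotProduct_sub]
      ring
    obtain ⟨y, hyX, hy⟩ := RDP.exists_le ℓ hxs1
    have hzero : lam ⬝ᵥ (d - D.mulVec xstar) = 0 := by
      rw [hlam, RDP.dot_aux]
      have : G.transpose.mulVec (d - D.mulVec xstar) = 0 := by
        have h2 := hxs2
        rw [Matrix.mulVec_sub, sub_eq_zero] at h2
        rw [Matrix.mulVec_sub, h2, sub_self]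
      rw [this, dotProduct_zero]
    have hLy : c ⬝ᵥ y + lam ⬝ᵥ (d - D.mulVec y) ≤ v := by
      rw [hℓval y]
      have := hℓval xstar
      rw [hzero, add_zero] at this
      have : ℓ xstar + lam ⬝ᵥ d = v := by linarith
      linarith [hy]
    calc lagrangianValue X c D d lam
        ≤ ((c ⬝ᵥ y + lam ⬝ᵥ (d - D.mulVec y) : ℝ) : EReal) := iInf₂_le y hyX
      _ ≤ (v : EReal) := EReal.coe_le_coe_iff.2 hLy
  -- strong duality: v ≤ Lhs
  have hstrong : (v : EReal) ≤ Lhs := by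
    have hub : ∀ ε : ℝ, 0 < ε → ((v - ε : ℝ) : EReal) ≤ Lhs := by
      intro ε hε
      obtain ⟨α, hα⟩ := RDP.sep X ⟨s, hs⟩ c D d G hxs1 hxs2
        (fun x hx hf => hmin' x ⟨hx, hf⟩) hε
      refine le_trans ?_ (le_iSup _ α)
      apply le_iInf₂
      intro x hx
      exact EReal.coe_le_coe_iff.2
        (le_of_lt (hα x (subset_convexHull ℝ X hx)))
    by_contra hcon
    push_neg at hcon
    have hne_top : Lhs ≠ ⊤ := by
      intro h
      rw [h] at hweak
      exact absurd (top_le_iff.1 hweak) (EReal.coe_ne_top v)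
    have hne_bot : Lhs ≠ ⊥ := by
      intro h
      have := hub 1 one_pos
      rw [h, le_bot_iff] at this
      exact EReal.coe_ne_bot _ this
    set l : ℝ := Lhs.toReal with hl
    have hLl : Lhs = (l : EReal) := (EReal.coe_toReal hne_top hne_bot).symm
    rw [hLl] at hcon hub
    have hlv : l < v := EReal.coe_lt_coe_iff.1 hcon
    have := hub ((v - l) / 2) (by linarith)
    have := EReal.coe_le_coe_iff.1 this
    linarith
  exact le_antisymm hweak hstrong
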